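/- Reductions of elaborated values: if · ⊢ₑ v : A ▷ e' where v is a value in the equi-recursive language, then there exists a λᵘFi value v' such that e' ↪* v' and · ⊢ₑ v : A ▷ v'. -/

import Mathlib

/-- Types: Int, Top, arrow, de Bruijn type variables, and recursive types μ. -/
inductive Ty : Type
| int : Ty
| top : Ty
| arrow : Ty → Ty → Ty
| var : Nat → Ty
| mu : Ty → Ty
deriving DecidableEq

/-- Shifting of de Bruijn type variables. -/
def tshift (d c : Nat) : Ty → Ty
| .int => .int
| .top => .top
| .arrow A B => .arrow (tshift d c A) (tshift d c B)
| .var n => if n < c then .var n else .var (n + d)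
| .mu A => .mu (tshift d (c+1) A)

/-- Capture-avoiding substitution of type S for variable k. -/
def tsubst (k : Nat) (S : Ty) : Ty → Ty
| .int => .int
| .top => .top
| .arrow A B => .arrow (tsubst k S A) (tsubst k S B)
| .var n => if n = k then S else if k < n then .var (n-1) else .var n
| .mu A => .mu (tsubst (k+1) (tshift 1 0 S) A)

/-- Well-formedness: all free type variables are below n. -/
def Ty.wf : Nat → Ty → Prop
| _, .int => True
| _, .top => True
| n, .arrow A B => A.wf n ∧ B.wf n
| n, .var i => i < n
| n, .mu A => A.wf (n+1)

/-- Brandt–Henglein inductive equi-recursive type equality H ⊢ A ≐ B. -/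
inductive TyEq : List (Ty × Ty) → Ty → Ty → Prop
| assump : (A, B) ∈ H → TyEq H A B
| refl : TyEq H A A
| trans : TyEq H A B → TyEq H B C → TyEq H A C
| symm : TyEq H A B → TyEq H B A
| unfold : TyEq H (.mu A) (tsubst 0 (.mu A) A)
| arrfix : TyEq ((Ty.arrow A1 A2, Ty.arrow B1 B2) :: H) A1 B1 →
           TyEq ((Ty.arrow A1 A2, Ty.arrow B1 B2) :: H) A2 B2 →
           TyEq H (.arrow A1 A2) (.arrow B1 B2)

/-- Cast operators, with de Bruijn cast variables (bound by cfix). -/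
inductive Cast : Type
| cvar : Nat → Cast
| id : Cast
| fold : Ty → Cast
| unfold : Ty → Cast
| arrow : Cast → Cast → Cast
| seq : Cast → Cast → Cast
| cfix : Cast → Cast
deriving DecidableEq

/-- The dual (reverse) cast ¬c. -/
def Cast.dual : Cast → Cast
| .cvar i => .cvar i
| .id => .id
| .fold A => .unfold A
| .unfold A => .fold A
| .arrow c1 c2 => .arrow c1.dual c2.dual
| .seq c1 c2 => .seq c2.dual c1.dual
| .cfix c => .cfix c.dual

/-- Shifting of cast variables. -/
def cshift (d c : Nat) : Cast → Cast
| .cvar n => if n < c then .cvar n else .cvar (n+d)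
| .id => .id
| .fold A => .fold A
| .unfold A => .unfold A
| .arrow c1 c2 => .arrow (cshift d c c1) (cshift d c c2)
| .seq c1 c2 => .seq (cshift d c c1) (cshift d c c2)
| .cfix c1 => .cfix (cshift d (c+1) c1)

/-- Capture-avoiding substitution of a cast for cast variable k. -/
def csubst (k : Nat) (s : Cast) : Cast → Cast
| .cvar n => if n = k then s else if k < n then .cvar (n-1) else .cvar n
| .id => .id
| .fold A => .fold A
| .unfold A => .unfold A
| .arrow c1 c2 => .arrow (csubst k s c1) (csubst k s c2)
| .seq c1 c2 => .seq (csubst k s c1) (csubst k s c2)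
| .cfix c1 => .cfix (csubst (k+1) (cshift 1 0 s) c1)

/-- Type casting judgment 𝔼 ⊢ A ↪ B : c (cast context as de Bruijn list). -/
inductive TypCast : List (Ty × Ty) → Ty → Ty → Cast → Prop
| id : TypCast E A A .id
| arrow : TypCast E A1 B1 c1 → TypCast E A2 B2 c2 →
    TypCast E (.arrow A1 A2) (.arrow B1 B2) (.arrow c1 c2)
| unfold : TypCast E (.mu A) (tsubst 0 (.mu A) A) (.unfold (.mu A))
| fold : TypCast E (tsubst 0 (.mu A) A) (.mu A) (.fold (.mu A))
| seq : TypCast E A B c1 → TypCast E B C c2 → TypCast E A C (.seq c1 c2)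
| var : E[n]? = some (A, B) → TypCast E A B (.cvar n)
| fix : TypCast ((Ty.arrow A1 A2, Ty.arrow B1 B2) :: E)
           (.arrow A1 A2) (.arrow B1 B2) (.arrow c1 c2) →
        TypCast E (.arrow A1 A2) (.arrow B1 B2) (.cfix (.arrow c1 c2))

/-- Terms of λᵘFi (de Bruijn term variables). -/
inductive Tm : Type
| var : Nat → Tm
| lit : Int → Tm
| app : Tm → Tm → Tm
| abs : Ty → Tm → Tm
| cast : Cast → Tm → Tm
deriving DecidableEq

def shiftTm (d c : Nat) : Tm → Tm
| .var n => if n < c then .var n else .var (n+d)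
| .lit n => .lit n
| .app a b => .app (shiftTm d c a) (shiftTm d c b)
| .abs A e => .abs A (shiftTm d (c+1) e)
| .cast cc e => .cast cc (shiftTm d c e)

/-- Capture-avoiding term substitution. -/
def substTm (k : Nat) (s : Tm) : Tm → Tm
| .var n => if n = k then s else if k < n then .var (n-1) else .var n
| .lit n => .lit n
| .app a b => .app (substTm k s a) (substTm k s b)
| .abs A e => .abs A (substTm (k+1) (shiftTm 1 0 s) e)
| .cast cc e => .cast cc (substTm k s e)

/-- Values of λᵘFi. -/
inductive Value : Tm → Prop
| lit : Value (.lit n)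
| abs : Value (.abs A e)
| fold : Value v → Value (.cast (.fold A) v)
| arrow : Value v → Value (.cast (.arrow c1 c2) v)

/-- Call-by-value reduction of λᵘFi, including the cast push rules. -/
inductive Step : Tm → Tm → Prop
| beta : Value v → Step (.app (.abs A e) v) (substTm 0 v e)
| appl : Step e1 e1' → Step (.app e1 e2) (.app e1' e2)
| appr : Value v → Step e2 e2' → Step (.app v e2) (.app v e2')
| cast : Step e e' → Step (.cast c e) (.cast c e')
| castId : Value v → Step (.cast .id v) v
| castArr : Value v1 → Value v2 →
    Step (.app (.cast (.arrow c1 c2) v1) v2)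
         (.cast c2 (.app v1 (.cast c1.dual v2)))
| castSeq : Step (.cast (.seq c1 c2) e) (.cast c2 (.cast c1 e))
| castElim : Value v → Step (.cast (.unfold A) (.cast (.fold B) v)) v
| castFix : Step (.cast (.cfix c) e) (.cast (csubst 0 (.cfix c) c) e)

/-- Equi-recursive (cast-free) call-by-value reduction. -/
inductive EStep : Tm → Tm → Prop
| beta : Value v → EStep (.app (.abs A e) v) (substTm 0 v e)
| appl : EStep e1 e1' → EStep (.app e1 e2) (.app e1' e2)
| appr : Value v → EStep e2 e2' → EStep (.app v e2) (.app v e2')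

/-- Erasure of casts. -/
def erase : Tm → Tm
| .var n => .var n
| .lit n => .lit n
| .app a b => .app (erase a) (erase b)
| .abs A e => .abs A (erase e)
| .cast _ e => erase e

/-- Typing of λᵘFi. -/
inductive Typing : List Ty → Tm → Ty → Prop
| var : G[n]? = some A → Typing G (.var n) A
| lit : Typing G (.lit n) .int
| abs : Typing (A :: G) e B → Typing G (.abs A e) (.arrow A B)
| app : Typing G e1 (.arrow A B) → Typing G e2 A → Typing G (.app e1 e2) B
| cast : Typing G e A → TypCast [] A B c → Typing G (.cast c e) B

/-- Equi-recursive typing with elaboration Γ ⊢ₑ e : A ▷ e'. -/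
inductive ETyping : List Ty → Tm → Ty → Tm → Prop
| var : G[n]? = some A → ETyping G (.var n) A (.var n)
| lit : ETyping G (.lit n) .int (.lit n)
| abs : ETyping (A :: G) e B e' → ETyping G (.abs A e) (.arrow A B) (.abs A e')
| app : ETyping G e1 (.arrow A B) e1' → ETyping G e2 A e2' →
        ETyping G (.app e1 e2) B (.app e1' e2')
| eq : ETyping G e A e' → TypCast [] A B c → ETyping G e B (.cast c e')

/-- Iso-recursive Amber subtyping (de Bruijn presentation), n counts bound variable pairs. -/
inductive AmberSub : Nat → Ty → Ty → Prop
| top : Ty.wf n A → AmberSub n A .top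
| int : AmberSub n .int .int
| var : i < n → AmberSub n (.var i) (.var i)
| self : Ty.wf n (.mu A) → AmberSub n (.mu A) (.mu A)
| arrow : AmberSub n B1 A1 → AmberSub n A2 B2 → AmberSub n (.arrow A1 A2) (.arrow B1 B2)
| murec : AmberSub (n+1) A B → AmberSub n (.mu A) (.mu B)

/-- Typing of λᵘ<:Fi: λᵘFi typing plus subsumption. -/
inductive STyping : List Ty → Tm → Ty → Prop
| var : G[n]? = some A → STyping G (.var n) A
| lit : STyping G (.lit n) .int
| abs : STyping (A :: G) e B → STyping G (.abs A e) (.arrow A B)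
| app : STyping G e1 (.arrow A B) → STyping G e2 A → STyping G (.app e1 e2) B
| cast : STyping G e A → TypCast [] A B c → STyping G (.cast c e) B
| sub : STyping G e A → AmberSub 0 A B → STyping G e B

/-- Divergence under a reduction relation. -/
def Diverges (R : Tm → Tm → Prop) (e : Tm) : Prop :=
  ∀ e', Relation.ReflTransGen R e e' → ∃ e'', R e' e''


lemma cast_steps {e e' : Tm} {c : Cast} (h : Relation.ReflTransGen Step e e') :
    Relation.ReflTransGen Step (.cast c e) (.cast c e') :=
  Relation.ReflTransGen.lift (r := Step) (fun x => Tm.cast c x) (fun _ _ h => Step.cast h) _ _ h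

lemma cshift_cshift (s : Cast) : ∀ k c, cshift 1 c (cshift k c s) = cshift (k+1) c s := by
  induction s with
  | cvar n =>
      intro k c
      by_cases h : n < c
      · simp [cshift, h]
      · have h2 : ¬ n + k < c := by omega
        simp [cshift, h, h2, Nat.add_assoc]
  | id => intros; rfl
  | fold A => intros; rfl
  | unfold A => intros; rfl
  | arrow c1 c2 ih1 ih2 => intro k c; simp [cshift, ih1, ih2]
  | seq c1 c2 ih1 ih2 => intro k c; simp [cshift, ih1, ih2]
  | cfix c1 ih => intro k c; simp [cshift, ih]

lemma cshift_zero (s : Cast) : ∀ c, cshift 0 c s = s := by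
  induction s with
  | cvar n => intro c; by_cases h : n < c <;> simp [cshift, h]
  | id => intros; rfl
  | fold A => intros; rfl
  | unfold A => intros; rfl
  | arrow c1 c2 ih1 ih2 => intro c; simp [cshift, ih1, ih2]
  | seq c1 c2 ih1 ih2 => intro c; simp [cshift, ih1, ih2]
  | cfix c1 ih => intro c; simp [cshift, ih]

lemma typcast_weaken {G : List (Ty × Ty)} {A B : Ty} {s : Cast} (h : TypCast G A B s) :
    ∀ F E E1, G = F ++ E → TypCast (F ++ E1 ++ E) A B (cshift E1.length F.length s) := by
  induction h with
  | id => intros; exact TypCast.id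
  | arrow h1 h2 ih1 ih2 =>
      intro F E E1 hG
      exact TypCast.arrow (ih1 F E E1 hG) (ih2 F E E1 hG)
  | unfold => intros; exact TypCast.unfold
  | fold => intros; exact TypCast.fold
  | seq h1 h2 ih1 ih2 =>
      intro F E E1 hG
      exact TypCast.seq (ih1 F E E1 hG) (ih2 F E E1 hG)
  | @var E0 n A' B' hn =>
      intro F E E1 hG
      subst hG
      by_cases hlt : n < F.length
      · simp only [cshift, if_pos hlt]
        refine TypCast.var ?_
        rw [List.getElem?_append_left hlt] at hn
        rw [List.getElem?_append_left (l₁ := F ++ E1) (by simp; omega),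
            List.getElem?_append_left hlt]
        exact hn
      · simp only [cshift, if_neg hlt]
        refine TypCast.var ?_
        rw [List.getElem?_append_right (by omega)] at hn
        rw [List.getElem?_append_right (l₁ := F ++ E1) (by simp; omega)]
        have : n + E1.length - (F ++ E1).length = n - F.length := by simp; omega
        rw [this]; exact hn
  | @fix A1 A2 B1 B2 E0 c1 c2 h ih =>
      intro F E E1 hG
      have hrec := ih ((Ty.arrow A1 A2, Ty.arrow B1 B2) :: F) E E1 (by simp [hG])
      simp only [List.cons_append, List.length_cons] at hrec
      simp only [cshift]
      exact TypCast.fix hrec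

lemma typcast_subst {G : List (Ty × Ty)} {C D : Ty} {c : Cast} (h : TypCast G C D c) :
    ∀ F p E s, G = F ++ p :: E → TypCast E p.1 p.2 s →
      TypCast (F ++ E) C D (csubst F.length (cshift F.length 0 s) c) := by
  induction h with
  | id => intros; exact TypCast.id
  | arrow h1 h2 ih1 ih2 =>
      intro F p E s hG hs
      exact TypCast.arrow (ih1 F p E s hG hs) (ih2 F p E s hG hs)
  | unfold => intros; exact TypCast.unfold
  | fold => intros; exact TypCast.fold
  | seq h1 h2 ih1 ih2 =>
      intro F p E s hG hs
      exact TypCast.seq (ih1 F p E s hG hs) (ih2 F p E s hG hs)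
  | @var E0 n A' B' hn =>
      intro F p E s hG hs
      subst hG
      rcases lt_trichotomy n F.length with hlt | heq | hgt
      · simp only [csubst, if_neg (by omega : ¬ n = F.length), if_neg (by omega : ¬ F.length < n)]
        refine TypCast.var ?_
        rw [List.getElem?_append_left hlt] at hn
        rw [List.getElem?_append_left hlt]
        exact hn
      · subst heq
        simp only [csubst, if_pos rfl]
        have hp : (F ++ p :: E)[F.length]? = some p := by
          rw [List.getElem?_append_right (le_refl _)]
          simp
        rw [hn] at hp
        have h1 : A' = p.1 := by cases p; simp_all
        have h2 : B' = p.2 := by cases p; simp_all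
        subst h1; subst h2
        have := typcast_weaken hs [] E F rfl
        simpa using this
      · simp only [csubst, if_neg (by omega : ¬ n = F.length), if_pos hgt]
        refine TypCast.var ?_
        rw [List.getElem?_append_right (by omega)] at hn
        rw [List.getElem?_append_right (by omega : F.length ≤ n - 1)]
        have hcons : (p :: E)[n - F.length]? = E[n - F.length - 1]? := by
          rw [List.getElem?_cons]
          simp only [if_neg (by omega : ¬ n - F.length = 0)]
        rw [hcons] at hn
        have heq2 : n - 1 - F.length = n - F.length - 1 := by omega
        rw [heq2]; exact hn
  | @fix A1 A2 B1 B2 E0 c1 c2 h ih =>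
      intro F p E s hG hs
      have hrec := ih ((Ty.arrow A1 A2, Ty.arrow B1 B2) :: F) p E s (by simp [hG]) hs
      simp only [List.cons_append, List.length_cons] at hrec
      simp only [csubst, cshift_cshift]
      simp only [csubst] at hrec
      exact TypCast.fix hrec

lemma typcast_fold_inv {E : List (Ty × Ty)} {X Y : Ty} {T : Ty}
    (h : TypCast E X Y (.fold T)) :
    ∃ A, T = .mu A ∧ Y = .mu A ∧ X = tsubst 0 (.mu A) A := by
  cases h
  exact ⟨_, rfl, rfl, rfl⟩

lemma typcast_arrowc_inv {E : List (Ty × Ty)} {X Y : Ty} {c1 c2 : Cast}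
    (h : TypCast E X Y (.arrow c1 c2)) :
    ∃ A1 A2 B1 B2, X = .arrow A1 A2 ∧ Y = .arrow B1 B2 := by
  cases h
  exact ⟨_, _, _, _, rfl, rfl⟩

lemma canonical_mu {v e : Tm} {A0 : Ty} (hv : Value e) (he : ETyping [] v (.mu A0) e) :
    ∃ w, e = .cast (.fold (.mu A0)) w ∧ Value w ∧ ETyping [] v (tsubst 0 (.mu A0) A0) w := by
  cases he with
  | var h => simp at h
  | app h1 h2 => cases hv
  | eq he' hc =>
      cases hv with
      | fold hw =>
          obtain ⟨A, rfl, hY, hX⟩ := typcast_fold_inv hc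
          have hA : A = A0 := by injection hY.symm
          subst hA
          subst hX
          exact ⟨_, rfl, hw, he'⟩
      | arrow hw =>
          obtain ⟨A1, A2, B1, B2, _, hY⟩ := typcast_arrowc_inv hc
          exact absurd hY (by simp)

lemma cast_red {E : List (Ty × Ty)} {A B : Ty} {c : Cast} (h : TypCast E A B c) :
    E = [] → ∀ {v e : Tm}, Value e → ETyping [] v A e →
      ∃ v', Value v' ∧ Relation.ReflTransGen Step (.cast c e) v' ∧ ETyping [] v B v' := by
  induction h with
  | id =>
      intro _ v e hv he
      exact ⟨e, hv, Relation.ReflTransGen.single (Step.castId hv), he⟩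
  | arrow h1 h2 _ _ =>
      intro hE v e hv he
      subst hE
      exact ⟨_, Value.arrow hv, Relation.ReflTransGen.refl, ETyping.eq he (TypCast.arrow h1 h2)⟩
  | unfold =>
      intro hE v e hv he
      obtain ⟨w, rfl, hw, hew⟩ := canonical_mu hv he
      exact ⟨w, hw, Relation.ReflTransGen.single (Step.castElim hw), hew⟩
  | fold =>
      intro hE v e hv he
      exact ⟨_, Value.fold hv, Relation.ReflTransGen.refl, ETyping.eq he TypCast.fold⟩
  | seq h1 h2 ih1 ih2 =>
      intro hE v e hv he
      obtain ⟨v1, hv1, hs1, he1⟩ := ih1 hE hv he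
      obtain ⟨v2, hv2, hs2, he2⟩ := ih2 hE hv1 he1
      exact ⟨v2, hv2, Relation.ReflTransGen.head Step.castSeq ((cast_steps hs1).trans hs2), he2⟩
  | var hn =>
      intro hE
      subst hE
      simp at hn
  | @fix A1 A2 B1 B2 E0 c1 c2 h _ =>
      intro hE v e hv he
      subst hE
      have hsub := typcast_subst h [] (Ty.arrow A1 A2, Ty.arrow B1 B2) []
        (.cfix (.arrow c1 c2)) rfl (TypCast.fix h)
      simp only [List.length_nil, cshift_zero, List.nil_append] at hsub
      refine ⟨.cast (csubst 0 (.cfix (.arrow c1 c2)) (.arrow c1 c2)) e, ?_,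
        Relation.ReflTransGen.single Step.castFix, ETyping.eq he hsub⟩
      simp only [csubst]
      exact Value.arrow hv

lemma elab_value_red_aux {G : List Ty} {v : Tm} {A : Ty} {e' : Tm} (h : ETyping G v A e') :
    G = [] → Value v →
    ∃ v', Value v' ∧ Relation.ReflTransGen Step e' v' ∧ ETyping [] v A v' := by
  induction h with
  | var hl => intro hG _; subst hG; simp at hl
  | lit => intro hG _; subst hG; exact ⟨_, Value.lit, Relation.ReflTransGen.refl, ETyping.lit⟩
  | abs h1 _ =>
      intro hG _
      subst hG
      exact ⟨_, Value.abs, Relation.ReflTransGen.refl, ETyping.abs h1⟩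
  | app h1 h2 _ _ => intro _ hv; cases hv
  | eq h1 hc ih =>
      intro hG hv
      obtain ⟨w, hw, hs, hew⟩ := ih hG hv
      obtain ⟨v'', hv'', hs2, he2⟩ := cast_red hc rfl hw hew
      exact ⟨v'', hv'', (cast_steps hs).trans hs2, he2⟩

/-- Elaborations of equi-recursive values reduce to λᵘFi values. -/
theorem elab_value_red (v e' : Tm) (A : Ty)
    (hv : Value v) (h : ETyping [] v A e') :
    ∃ v', Value v' ∧ Relation.ReflTransGen Step e' v' ∧ ETyping [] v A v' :=
  elab_value_red_aux h rfl hv
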